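/- Let G be a finite d-regular edge-transitive graph on v(G) vertices and t ≥ 0. Then p(G,t) = 2t·M'(G,t)/(v(G)·M(G,t)) satisfies p(G,t) ≤ d·t/(1+d·t). -/

import Mathlib

open scoped Classical
open Finset

/-- Number of matchings with exactly `k` edges in `G`. -/
noncomputable def numMatchings {V : Type*} [Fintype V] (G : SimpleGraph V) (k : ℕ) : ℕ :=
  (G.edgeFinset.powerset.filter (fun M => M.card = k ∧
    ∀ e ∈ M, ∀ f ∈ M, e ≠ f → ∀ v : V, ¬(v ∈ e ∧ v ∈ f))).card

/-- Matching generating function `M(G,t) = Σ_k m_k(G) t^k`. -/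
noncomputable def matchGen {V : Type*} [Fintype V] (G : SimpleGraph V) (t : ℝ) : ℝ :=
  ∑ k ∈ Finset.range (Fintype.card V + 1), (numMatchings G k : ℝ) * t ^ k

/-- Derivative `M'(G,t) = Σ_k k·m_k(G) t^(k-1)`. -/
noncomputable def matchGenDeriv {V : Type*} [Fintype V] (G : SimpleGraph V) (t : ℝ) : ℝ :=
  ∑ k ∈ Finset.range (Fintype.card V + 1), (k : ℝ) * (numMatchings G k : ℝ) * t ^ (k - 1)

/-- The graph obtained from `G` by deleting all vertices in `S` (kept as isolated
vertices, which does not affect matchings). -/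
def deleteVerts {V : Type*} (G : SimpleGraph V) (S : Set V) : SimpleGraph V where
  Adj a b := G.Adj a b ∧ a ∉ S ∧ b ∉ S
  symm := ⟨fun _ _ h => ⟨h.1.symm, h.2.2, h.2.1⟩⟩
  loopless := ⟨fun a h => G.irrefl h.1⟩

/-! ### Auxiliary definitions and lemmas -/

noncomputable def mset {V : Type*} [Fintype V] (G : SimpleGraph V) (k : ℕ) :
    Finset (Finset (Sym2 V)) :=
  (G.edgeFinset.powerset.filter (fun M => M.card = k ∧
    ∀ e ∈ M, ∀ f ∈ M, e ≠ f → ∀ v : V, ¬(v ∈ e ∧ v ∈ f)))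

lemma numMatchings_eq {V : Type*} [Fintype V] (G : SimpleGraph V) (k : ℕ) :
    numMatchings G k = (mset G k).card := rfl

lemma mem_mset {V : Type*} [Fintype V] (G : SimpleGraph V) (k : ℕ) (M : Finset (Sym2 V)) :
    M ∈ mset G k ↔ (∀ e ∈ M, e ∈ G.edgeSet) ∧ M.card = k ∧
      ∀ e ∈ M, ∀ f ∈ M, e ≠ f → ∀ v : V, ¬(v ∈ e ∧ v ∈ f) := by
  simp [mset, Finset.mem_filter, Finset.mem_powerset, Finset.subset_iff,
    SimpleGraph.mem_edgeFinset, and_assoc]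

lemma numMatchings_zero {V : Type*} [Fintype V] (G : SimpleGraph V) :
    numMatchings G 0 = 1 := by
  rw [numMatchings_eq]
  have : mset G 0 = {∅} := by
    ext M
    simp only [mem_mset, Finset.mem_singleton, Finset.card_eq_zero]
    constructor
    · rintro ⟨-, h, -⟩; exact h
    · rintro rfl; simp
  rw [this]; simp

lemma deleteVerts_le {V : Type*} (G : SimpleGraph V) (S : Set V) :
    deleteVerts G S ≤ G := fun _ _ h => h.1

lemma mem_edgeSet_deleteVerts {V : Type*} (G : SimpleGraph V) (S : Set V) (e : Sym2 V) :
    e ∈ (deleteVerts G S).edgeSet ↔ e ∈ G.edgeSet ∧ ∀ v ∈ e, v ∉ S := by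
  induction e with
  | h a b =>
    simp only [SimpleGraph.mem_edgeSet, Sym2.mem_iff]
    constructor
    · rintro ⟨h, ha, hb⟩
      exact ⟨h, fun v hv => by rcases hv with rfl | rfl <;> assumption⟩
    · rintro ⟨h, hv⟩
      exact ⟨h, hv a (Or.inl rfl), hv b (Or.inr rfl)⟩

lemma mset_map_subset {V : Type*} [Fintype V] {G H : SimpleGraph V} (φ : G ≃g H) (k : ℕ)
    (M : Finset (Sym2 V)) (hM : M ∈ mset G k) :
    M.image (Sym2.map φ) ∈ mset H k := by
  rw [mem_mset] at hM ⊢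
  obtain ⟨hedge, hcard, hdisj⟩ := hM
  have hinj : Function.Injective (Sym2.map (φ : V → V)) := Sym2.map.injective φ.injective
  refine ⟨?_, ?_, ?_⟩
  · rintro e he
    rw [Finset.mem_image] at he
    obtain ⟨e', he', rfl⟩ := he
    exact φ.map_mem_edgeSet_iff.mpr (hedge e' he')
  · rw [Finset.card_image_of_injective _ hinj, hcard]
  · rintro e he f hf hef v ⟨hve, hvf⟩
    rw [Finset.mem_image] at he hf
    obtain ⟨e', he', rfl⟩ := he
    obtain ⟨f', hf', rfl⟩ := hf
    obtain ⟨a, ha, rfl⟩ := Sym2.mem_map.mp hve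
    obtain ⟨b, hb, hab⟩ := Sym2.mem_map.mp hvf
    have : a = b := φ.injective hab.symm
    subst this
    exact hdisj e' he' f' hf' (fun h => hef (by rw [h])) a ⟨ha, hb⟩

lemma numMatchings_iso {V : Type*} [Fintype V] {G H : SimpleGraph V} (φ : G ≃g H) (k : ℕ) :
    (mset G k).card = (mset H k).card := by
  apply Finset.card_nbij' (i := fun M => M.image (Sym2.map φ))
    (j := fun M => M.image (Sym2.map φ.symm))
  · exact fun M hM => mset_map_subset φ k M hM
  · exact fun M hM => mset_map_subset φ.symm k M hM
  · intro M hM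
    simp only [Finset.image_image]
    have : (Sym2.map (φ.symm : V → V)) ∘ (Sym2.map (φ : V → V)) = id := by
      funext e
      simp [Sym2.map_map, Function.comp_def]
    rw [this, Finset.image_id]
  · intro M hM
    simp only [Finset.image_image]
    have : (Sym2.map (φ : V → V)) ∘ (Sym2.map (φ.symm : V → V)) = id := by
      funext e
      simp [Sym2.map_map, Function.comp_def]
    rw [this, Finset.image_id]

lemma card_mset_deleteVerts_eq {V : Type*} [Fintype V] (G : SimpleGraph V) (φ : G ≃g G)
    (f : Sym2 V) (j : ℕ) :
    (mset (deleteVerts G {v | v ∈ f}) j).card =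
      (mset (deleteVerts G {v | v ∈ Sym2.map φ f}) j).card := by
  have key : ∀ a : V, φ a ∈ Sym2.map (φ : V → V) f ↔ a ∈ f := by
    intro a
    rw [Sym2.mem_map]
    constructor
    · rintro ⟨b, hb, hba⟩
      rwa [φ.injective hba] at hb
    · exact fun h => ⟨a, h, rfl⟩
  refine numMatchings_iso (⟨φ.toEquiv, ?_⟩ :
    deleteVerts G {v | v ∈ f} ≃g deleteVerts G {v | v ∈ Sym2.map (φ : V → V) f}) j
  intro a b
  constructor
  · rintro ⟨h1, h2, h3⟩
    exact ⟨φ.map_adj_iff.mp h1, fun ha => h2 ((key a).mpr ha), fun hb => h3 ((key b).mpr hb)⟩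
  · rintro ⟨h1, h2, h3⟩
    exact ⟨φ.map_adj_iff.mpr h1, fun ha => h2 ((key a).mp ha), fun hb => h3 ((key b).mp hb)⟩

/-- double counting : k·m_k ≤ Σ_e m_{k-1}(G - V(e)) -/
lemma deriv_count {V : Type*} [Fintype V] (G : SimpleGraph V) (k : ℕ) :
    k * (mset G k).card ≤
      ∑ f ∈ G.edgeFinset, (mset (deleteVerts G {v | v ∈ f}) (k - 1)).card := by
  have hL : k * (mset G k).card = ((mset G k).sigma (fun M => M)).card := by
    rw [Finset.card_sigma]
    rw [Finset.sum_congr rfl (fun M hM => ((mem_mset G k M).mp hM).2.1)]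
    simp [Finset.sum_const, Nat.mul_comm]
  have hR : ∑ f ∈ G.edgeFinset, (mset (deleteVerts G {v | v ∈ f}) (k - 1)).card =
      (G.edgeFinset.sigma (fun f => mset (deleteVerts G {v | v ∈ f}) (k - 1))).card := by
    rw [Finset.card_sigma]
  rw [hL, hR]
  apply Finset.card_le_card_of_injOn (fun p => ⟨p.2, p.1.erase p.2⟩)
  · rintro ⟨M, e⟩ hp
    simp only [Finset.mem_coe, Finset.mem_sigma] at hp ⊢
    obtain ⟨hM, heM⟩ := hp
    rw [mem_mset] at hM
    obtain ⟨hedge, hcard, hdisj⟩ := hM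
    refine ⟨SimpleGraph.mem_edgeFinset.mpr (hedge e heM), ?_⟩
    rw [mem_mset]
    refine ⟨?_, ?_, ?_⟩
    · intro f hf
      have hfM := Finset.mem_of_mem_erase hf
      have hfe : f ≠ e := Finset.ne_of_mem_erase hf
      rw [mem_edgeSet_deleteVerts]
      refine ⟨hedge f hfM, fun v hv hve => ?_⟩
      exact hdisj f hfM e heM hfe v ⟨hv, hve⟩
    · rw [Finset.card_erase_of_mem heM, hcard]
    · intro a ha b hb hab v
      exact hdisj a (Finset.mem_of_mem_erase ha) b (Finset.mem_of_mem_erase hb) hab v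
  · rintro ⟨M₁, e₁⟩ hp ⟨M₂, e₂⟩ hq h
    rw [Finset.mem_coe, Finset.mem_sigma] at hp hq
    dsimp only at hp hq
    obtain ⟨h1, h2⟩ := Sigma.mk.inj_iff.mp h
    subst h1
    have h2' : M₁.erase e₁ = M₂.erase e₁ := eq_of_heq h2
    have : M₁ = M₂ := by
      rw [← Finset.insert_erase hp.2, ← Finset.insert_erase hq.2, h2']
    subst this
    rfl

lemma vertex_decomp {V : Type*} [Fintype V] (G : SimpleGraph V) {u w : V} (_huw : G.Adj u w)
    (k : ℕ) (hk : 1 ≤ k) :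
    (mset (deleteVerts G {v | v ∈ s(u, w)}) k).card
      + ∑ x ∈ G.neighborFinset u, (mset (deleteVerts G {v | v ∈ s(u, x)}) (k - 1)).card
    ≤ (mset G k).card := by
  classical
  set A := mset (deleteVerts G {v | v ∈ s(u, w)}) k with hA
  set B := (G.neighborFinset u).biUnion
      (fun x => (mset (deleteVerts G {v | v ∈ s(u, x)}) (k - 1)).image (insert s(u, x))) with hB
  have avoid : ∀ (x : V) (M : Finset (Sym2 V)),
      M ∈ mset (deleteVerts G {v | v ∈ s(u, x)}) (k - 1) → s(u, x) ∉ M := by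
    intro x M hM hmem
    have := ((mem_mset _ _ _).mp hM).1 _ hmem
    rw [mem_edgeSet_deleteVerts] at this
    exact this.2 u (Sym2.mem_mk_left u x) (by simp)
  have himg : ∀ x ∈ G.neighborFinset u,
      (mset (deleteVerts G {v | v ∈ s(u, x)}) (k - 1)).image (insert s(u, x)) ⊆ mset G k := by
    intro x hx N hN
    rw [Finset.mem_image] at hN
    obtain ⟨M, hM, rfl⟩ := hN
    have hux : G.Adj u x := (SimpleGraph.mem_neighborFinset G u x).mp hx
    rw [mem_mset] at hM ⊢
    obtain ⟨hedge, hcard, hdisj⟩ := hM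
    have hnotmem := avoid x M (by rw [mem_mset]; exact ⟨hedge, hcard, hdisj⟩)
    have hav : ∀ e ∈ M, ∀ v ∈ e, ¬ v ∈ s(u, x) := by
      intro e he v hv
      have := hedge e he
      rw [mem_edgeSet_deleteVerts] at this
      exact fun hmem => this.2 v hv hmem
    refine ⟨?_, ?_, ?_⟩
    · intro e he
      rcases Finset.mem_insert.mp he with rfl | he'
      · exact hux
      · exact ((mem_edgeSet_deleteVerts _ _ _).mp (hedge e he')).1
    · rw [Finset.card_insert_of_notMem hnotmem, hcard]
      omega
    · intro e he f hf hef v hv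
      rcases Finset.mem_insert.mp he with rfl | he' <;>
        rcases Finset.mem_insert.mp hf with rfl | hf'
      · exact hef rfl
      · exact hav f hf' v hv.2 hv.1
      · exact hav e he' v hv.1 hv.2
      · exact ((mem_mset _ _ _).mp (by rw [mem_mset]; exact ⟨hedge, hcard, hdisj⟩)).2.2
          e he' f hf' hef v hv
  have hAsub : A ⊆ mset G k := by
    intro M hM
    rw [hA, mem_mset] at hM
    rw [mem_mset]
    exact ⟨fun e he => SimpleGraph.edgeSet_mono (deleteVerts_le _ _) (hM.1 e he), hM.2⟩
  have hBsub : B ⊆ mset G k := by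
    intro M hM
    rw [hB, Finset.mem_biUnion] at hM
    obtain ⟨x, hx, hMx⟩ := hM
    exact himg x hx hMx
  have hunion : A ∪ B ⊆ mset G k := Finset.union_subset hAsub hBsub
  have hdisjAB : Disjoint A B := by
    rw [Finset.disjoint_left]
    intro M hMA hMB
    rw [hB, Finset.mem_biUnion] at hMB
    obtain ⟨x, hx, hMx⟩ := hMB
    rw [Finset.mem_image] at hMx
    obtain ⟨N, hN, rfl⟩ := hMx
    rw [hA, mem_mset] at hMA
    have := hMA.1 s(u, x) (Finset.mem_insert_self _ _)
    rw [mem_edgeSet_deleteVerts] at this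
    exact this.2 u (Sym2.mem_mk_left u x) (by simp)
  have hdisjB : ∀ x ∈ G.neighborFinset u, ∀ y ∈ G.neighborFinset u, x ≠ y →
      Disjoint ((mset (deleteVerts G {v | v ∈ s(u, x)}) (k - 1)).image (insert s(u, x)))
        ((mset (deleteVerts G {v | v ∈ s(u, y)}) (k - 1)).image (insert s(u, y))) := by
    intro x hx y hy hxy
    rw [Finset.disjoint_left]
    intro M hMx hMy
    rw [Finset.mem_image] at hMx hMy
    obtain ⟨N₁, hN₁, rfl⟩ := hMx
    obtain ⟨N₂, hN₂, hins⟩ := hMy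
    have hmem : s(u, y) ∈ insert s(u, x) N₁ := by
      rw [← hins]; exact Finset.mem_insert_self _ _
    rcases Finset.mem_insert.mp hmem with heq | hmem'
    · rw [Sym2.eq_iff] at heq
      rcases heq with ⟨-, h⟩ | ⟨h, -⟩
      · exact hxy h.symm
      · exact G.ne_of_adj ((SimpleGraph.mem_neighborFinset G u x).mp hx) h
    · have := ((mem_mset _ _ _).mp hN₁).1 _ hmem'
      rw [mem_edgeSet_deleteVerts] at this
      exact this.2 u (Sym2.mem_mk_left u y) (by simp)
  have hinj : ∀ x ∈ G.neighborFinset u,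
      Set.InjOn (insert s(u, x))
        ((mset (deleteVerts G {v | v ∈ s(u, x)}) (k - 1) : Finset (Finset (Sym2 V))) :
          Set (Finset (Sym2 V))) := by
    intro x hx N₁ hN₁ N₂ hN₂ h
    have h₁ := avoid x N₁ hN₁
    have h₂ := avoid x N₂ hN₂
    rw [← Finset.erase_insert h₁, ← Finset.erase_insert h₂, h]
  calc A.card + ∑ x ∈ G.neighborFinset u,
        (mset (deleteVerts G {v | v ∈ s(u, x)}) (k - 1)).card
      = A.card + ∑ x ∈ G.neighborFinset u,
        ((mset (deleteVerts G {v | v ∈ s(u, x)}) (k - 1)).image (insert s(u, x))).card := by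
        congr 1
        exact Finset.sum_congr rfl (fun x hx => (Finset.card_image_of_injOn (hinj x hx)).symm)
    _ = A.card + B.card := by rw [hB, Finset.card_biUnion hdisjB]
    _ = (A ∪ B).card := (Finset.card_union_of_disjoint hdisjAB).symm
    _ ≤ (mset G k).card := Finset.card_le_card hunion

theorem stmt6 {V : Type*} [Fintype V] (G : SimpleGraph V) (d : ℕ)
    (hreg : G.IsRegularOfDegree d)
    (hedgetrans : ∀ e ∈ G.edgeFinset, ∀ f ∈ G.edgeFinset, ∃ φ : G ≃g G, e.map φ = f)
    (t : ℝ) (ht : 0 ≤ t) :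
    2 * t * matchGenDeriv G t / ((Fintype.card V : ℝ) * matchGen G t) ≤
      d * t / (1 + d * t) := by
  classical
  have hdt : (0:ℝ) ≤ (d:ℝ) * t := mul_nonneg (Nat.cast_nonneg d) ht
  have h1dt : (0:ℝ) < 1 + (d:ℝ) * t := by linarith
  by_cases hE : G.edgeFinset = ∅
  · have hderiv : matchGenDeriv G t = 0 := by
      unfold matchGenDeriv
      apply Finset.sum_eq_zero
      intro k _
      rcases Nat.eq_zero_or_pos k with rfl | hkpos
      · simp
      · have hnm : numMatchings G k = 0 := by
          rw [numMatchings_eq, Finset.card_eq_zero, Finset.eq_empty_iff_forall_notMem]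
          intro M hM
          rw [mem_mset] at hM
          obtain ⟨hMe, hMc, -⟩ := hM
          obtain ⟨e, he⟩ := Finset.card_pos.mp (hMc ▸ hkpos)
          have := hMe e he
          rw [← SimpleGraph.mem_edgeFinset, hE] at this
          exact absurd this (Finset.notMem_empty e)
        rw [hnm]; simp
    rw [hderiv]
    simp only [mul_zero, zero_div]
    exact div_nonneg hdt h1dt.le
  · obtain ⟨e₀, he₀⟩ := Finset.nonempty_iff_ne_empty.mpr hE
    induction e₀ using Sym2.ind with
    | _ u w =>
    have huw : G.Adj u w := by rwa [SimpleGraph.mem_edgeFinset, SimpleGraph.mem_edgeSet] at he₀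
    haveI : Nonempty V := ⟨u⟩
    set v : ℕ := Fintype.card V with hvdef
    set c : ℕ → ℕ := fun j => (mset (deleteVerts G {x | x ∈ s(u, w)}) j).card with hcdef
    have hc : ∀ f ∈ G.edgeFinset, ∀ j, (mset (deleteVerts G {x | x ∈ f}) j).card = c j := by
      intro f hf j
      obtain ⟨φ, hφ⟩ := hedgetrans s(u, w) he₀ f hf
      rw [hcdef, ← hφ]
      exact (card_mset_deleteVerts_eq G φ s(u, w) j).symm
    have hc0 : c 0 = 1 := by
      have h := numMatchings_zero (deleteVerts G {x | x ∈ s(u, w)})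
      rw [numMatchings_eq] at h
      exact h
    set C : ℝ := ∑ j ∈ Finset.range v, (c j : ℝ) * t ^ j with hCdef
    have htpow : ∀ j : ℕ, (0:ℝ) ≤ t ^ j := fun j => pow_nonneg ht j
    have hvpos : 0 < v := Fintype.card_pos
    have hC1 : (1:ℝ) ≤ C := by
      have : (1:ℝ) = (c 0 : ℝ) * t ^ 0 := by rw [hc0]; simp
      rw [this, hCdef]
      exact Finset.single_le_sum (fun j _ => mul_nonneg (Nat.cast_nonneg _) (htpow j))
        (Finset.mem_range.mpr hvpos)
    have hCpos : (0:ℝ) < C := lt_of_lt_of_le one_pos hC1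
    -- step (ii) : t * M' ≤ |E| * (t * C)
    have hder : t * matchGenDeriv G t ≤ (G.edgeFinset.card : ℝ) * (t * C) := by
      unfold matchGenDeriv
      rw [Finset.mul_sum]
      rw [Finset.sum_range_succ'
        (fun k => t * ((k : ℝ) * (numMatchings G k : ℝ) * t ^ (k - 1))) v]
      have hzero : t * ((0:ℕ) * (numMatchings G 0 : ℝ) * t ^ (0 - 1)) = 0 := by
        simp
      rw [hzero, add_zero]
      have hterm : ∀ i ∈ Finset.range v,
          t * (((i+1 : ℕ) : ℝ) * (numMatchings G (i+1) : ℝ) * t ^ ((i+1) - 1)) ≤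
            (G.edgeFinset.card : ℝ) * ((c i : ℝ) * t ^ i) * t := by
        intro i _
        have h1 : (i+1) * numMatchings G (i+1) ≤ G.edgeFinset.card * c i := by
          calc (i+1) * numMatchings G (i+1)
              ≤ ∑ f ∈ G.edgeFinset,
                  (mset (deleteVerts G {x | x ∈ f}) ((i+1) - 1)).card := by
                rw [numMatchings_eq]; exact deriv_count G (i+1)
            _ = ∑ _f ∈ G.edgeFinset, c i := by
                refine Finset.sum_congr rfl (fun f hf => ?_)
                rw [Nat.add_sub_cancel]
                exact hc f hf i
            _ = G.edgeFinset.card * c i := by rw [Finset.sum_const, smul_eq_mul]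
        have h1' : (((i+1:ℕ)) : ℝ) * (numMatchings G (i+1) : ℝ) ≤
            (G.edgeFinset.card : ℝ) * (c i : ℝ) := by exact_mod_cast h1
        have hps : ((i+1) - 1) = i := rfl
        rw [hps]
        calc t * (((i+1 : ℕ) : ℝ) * (numMatchings G (i+1) : ℝ) * t ^ i)
            = (((i+1:ℕ)) : ℝ) * (numMatchings G (i+1) : ℝ) * (t ^ i * t) := by ring
          _ ≤ (G.edgeFinset.card : ℝ) * (c i : ℝ) * (t ^ i * t) := by
              apply mul_le_mul_of_nonneg_right h1'
              exact mul_nonneg (htpow i) ht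
          _ = (G.edgeFinset.card : ℝ) * ((c i : ℝ) * t ^ i) * t := by ring
      calc ∑ i ∈ Finset.range v,
            t * (((i+1 : ℕ) : ℝ) * (numMatchings G (i+1) : ℝ) * t ^ ((i+1) - 1))
          ≤ ∑ i ∈ Finset.range v, (G.edgeFinset.card : ℝ) * ((c i : ℝ) * t ^ i) * t :=
            Finset.sum_le_sum hterm
        _ = (G.edgeFinset.card : ℝ) * (t * C) := by
            rw [hCdef, Finset.mul_sum, Finset.mul_sum]
            exact Finset.sum_congr rfl (fun i _ => by ring)
    -- step (iii) : (1 + d t) C ≤ M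
    have hgen : (1 + (d:ℝ) * t) * C ≤ matchGen G t := by
      unfold matchGen
      rw [Finset.sum_range_succ' (fun k => (numMatchings G k : ℝ) * t ^ k) v]
      have hm0 : (numMatchings G 0 : ℝ) * t ^ 0 = 1 := by rw [numMatchings_zero]; simp
      rw [hm0]
      have hterm : ∀ i ∈ Finset.range v,
          ((c (i+1) : ℝ) + (d:ℝ) * (c i : ℝ)) * t ^ (i+1) ≤
            (numMatchings G (i+1) : ℝ) * t ^ (i+1) := by
        intro i _
        apply mul_le_mul_of_nonneg_right _ (htpow (i+1))
        have hnat : c (i+1) + d * c i ≤ numMatchings G (i+1) := by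
          have hvd := vertex_decomp G huw (i+1) (Nat.succ_le_succ (Nat.zero_le i))
          rw [Nat.add_sub_cancel] at hvd
          have hsum : ∑ x ∈ G.neighborFinset u,
              (mset (deleteVerts G {y | y ∈ s(u, x)}) i).card = d * c i := by
            rw [Finset.sum_congr rfl (fun x hx => hc s(u, x)
              (SimpleGraph.mem_edgeFinset.mpr
                ((SimpleGraph.mem_neighborFinset G u x).mp hx)) i)]
            rw [Finset.sum_const, smul_eq_mul, G.card_neighborFinset_eq_degree, hreg u]
          rw [numMatchings_eq]
          calc c (i+1) + d * c i
              = (mset (deleteVerts G {x | x ∈ s(u, w)}) (i+1)).card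
                + ∑ x ∈ G.neighborFinset u,
                    (mset (deleteVerts G {y | y ∈ s(u, x)}) i).card := by
                rw [hsum, hcdef]
            _ ≤ (mset G (i+1)).card := hvd
        calc (c (i+1) : ℝ) + (d:ℝ) * (c i : ℝ)
            = ((c (i+1) + d * c i : ℕ) : ℝ) := by push_cast; ring
          _ ≤ (numMatchings G (i+1) : ℝ) := by exact_mod_cast hnat
      have hsum2 : ∑ i ∈ Finset.range v, ((c (i+1) : ℝ) + (d:ℝ) * (c i : ℝ)) * t ^ (i+1) ≤
          ∑ i ∈ Finset.range v, (numMatchings G (i+1) : ℝ) * t ^ (i+1) :=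
        Finset.sum_le_sum hterm
      have hCle : C ≤ 1 + ∑ i ∈ Finset.range v, (c (i+1) : ℝ) * t ^ (i+1) := by
        have hsub : C ≤ ∑ j ∈ Finset.range (v+1), (c j : ℝ) * t ^ j := by
          rw [hCdef]
          apply Finset.sum_le_sum_of_subset_of_nonneg
            (Finset.range_subset_range.mpr (Nat.le_succ v))
          exact fun j _ _ => mul_nonneg (Nat.cast_nonneg _) (htpow j)
        rw [Finset.sum_range_succ' (fun j => (c j : ℝ) * t ^ j) v] at hsub
        have : ((c 0 : ℝ)) * t ^ 0 = 1 := by rw [hc0]; simp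
        rw [this] at hsub
        linarith
      have hexp : ∑ i ∈ Finset.range v, ((c (i+1) : ℝ) + (d:ℝ) * (c i : ℝ)) * t ^ (i+1) =
          (∑ i ∈ Finset.range v, (c (i+1) : ℝ) * t ^ (i+1)) + (d:ℝ) * t * C := by
        rw [hCdef, Finset.mul_sum, ← Finset.sum_add_distrib]
        refine Finset.sum_congr rfl (fun i _ => ?_)
        rw [pow_succ]
        ring
      have hring : (1 + (d:ℝ) * t) * C = C + (d:ℝ) * t * C := by ring
      linarith
    have hMpos : (0:ℝ) < matchGen G t :=
      lt_of_lt_of_le (mul_pos h1dt hCpos) hgen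
    have hvd : (v : ℝ) * (d : ℝ) = 2 * (G.edgeFinset.card : ℝ) := by
      have h := G.sum_degrees_eq_twice_card_edges
      rw [Finset.sum_congr rfl (fun x _ => hreg x), Finset.sum_const, smul_eq_mul,
        Finset.card_univ] at h
      exact_mod_cast h
    have hvposR : (0:ℝ) < (v:ℝ) := by exact_mod_cast hvpos
    set Ec : ℝ := (G.edgeFinset.card : ℝ) with hEcdef
    set Mp : ℝ := matchGenDeriv G t with hMpdef
    set Mg : ℝ := matchGen G t with hMgdef
    clear_value Ec Mp Mg
    clear_value C
    rw [div_le_div_iff₀ (mul_pos hvposR hMpos) h1dt]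
    calc 2 * t * Mp * (1 + (d:ℝ) * t)
        = 2 * (t * Mp) * (1 + (d:ℝ) * t) := by ring
      _ ≤ 2 * (Ec * (t * C)) * (1 + (d:ℝ) * t) := by
          apply mul_le_mul_of_nonneg_right _ h1dt.le
          linarith
      _ = (v:ℝ) * (d:ℝ) * (t * C) * (1 + (d:ℝ) * t) := by rw [hvd]; ring
      _ = (d:ℝ) * t * ((v:ℝ) * ((1 + (d:ℝ) * t) * C)) := by ring
      _ ≤ (d:ℝ) * t * ((v:ℝ) * Mg) := by
          apply mul_le_mul_of_nonneg_left _ hdt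
          exact mul_le_mul_of_nonneg_left hgen hvposR.le
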